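/- For every d ∈ ℕ there is no C² formula φ(x) with one free variable such that for every finite directed labelled graph G of dimension d and every node v of G: G ⊨ φ(v) if and only if the edge relation of G is a strict linear order. -/

import Mathlib

/-- The two variables of the logic `C²`. -/
inductive C2Var : Type
  | x : C2Var
  | y : C2Var
deriving DecidableEq

/-- Formulas of `C²`, the two-variable fragment of first-order logic with counting, over
the signature with one binary relation symbol `E` and unary predicates `P₁,…,P_d`.
`exN k v φ` is the counting quantifier `∃_k v. φ` ("at least `k` elements"). -/
inductive C2 (d : ℕ) : Type
  | eq : C2Var → C2Var → C2 d
  | edge : C2Var → C2Var → C2 d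
  | pred : Fin d → C2Var → C2 d
  | not : C2 d → C2 d
  | and : C2 d → C2 d → C2 d
  | or : C2 d → C2 d → C2 d
  | exN : ℕ → C2Var → C2 d → C2 d

/-- Satisfaction of a `C²` formula in a finite directed labelled graph `(V, E, lab)`
under an assignment `a` of the two variables. -/
def C2.sat {d : ℕ} {V : Type} [Fintype V] (E : V → V → Prop) (lab : V → Fin d → Bool) :
    C2 d → (C2Var → V) → Prop
  | .eq s t, a => a s = a t
  | .edge s t, a => E (a s) (a t)
  | .pred i s, a => lab (a s) i = true
  | .not φ, a => ¬ C2.sat E lab φ a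
  | .and φ ψ, a => C2.sat E lab φ a ∧ C2.sat E lab ψ a
  | .or φ ψ, a => C2.sat E lab φ a ∨ C2.sat E lab ψ a
  | .exN k w φ, a => k ≤ Nat.card {u : V | C2.sat E lab φ (Function.update a w u)}

/-- Quantifier nesting depth of a `C²` formula. -/
def C2.depth {d : ℕ} : C2 d → ℕ
  | .eq _ _ => 0
  | .edge _ _ => 0
  | .pred _ _ => 0
  | .not φ => φ.depth
  | .and φ ψ => max φ.depth ψ.depth
  | .or φ ψ => max φ.depth ψ.depth
  | .exN _ _ φ => φ.depth + 1

/-- Counting rank of a `C²` formula: the maximal `k` occurring in a counting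
quantifier `∃_k`. -/
def C2.rank {d : ℕ} : C2 d → ℕ
  | .eq _ _ => 0
  | .edge _ _ => 0
  | .pred _ _ => 0
  | .not φ => φ.rank
  | .and φ ψ => max φ.rank ψ.rank
  | .or φ ψ => max φ.rank ψ.rank
  | .exN k _ φ => max k φ.rank

/-- Free variables of a `C²` formula. -/
def C2.freeVars {d : ℕ} : C2 d → Finset C2Var
  | .eq s t => {s, t}
  | .edge s t => {s, t}
  | .pred _ s => {s}
  | .not φ => φ.freeVars
  | .and φ ψ => φ.freeVars ∪ ψ.freeVars
  | .or φ ψ => φ.freeVars ∪ ψ.freeVars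
  | .exN _ w φ => φ.freeVars.erase w

/-- A strict linear order on a type `V`: an irreflexive, transitive and total
binary relation. -/
def IsStrictLinearOrderRel {V : Type} (E : V → V → Prop) : Prop :=
  (∀ v, ¬ E v v) ∧ (∀ u v w, E u v → E v w → E u w) ∧ (∀ u v : V, u ≠ v → E u v ∨ E v u)


namespace Stmt6Aux

theorem ncard_filter {V : Type} [Fintype V] (p : V → Prop) [DecidablePred p] :
    Nat.card {u : V | p u} = (Finset.univ.filter p).card := by
  classical
  rw [Nat.card_eq_fintype_card, Fintype.card_subtype]
  congr 1

/-- The key counting lemma: if two predicates are matched classwise, with classes of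
equal size or both of size ≥ r, then counting thresholds ≤ r agree. -/
theorem count_lemma {V : Type} [Fintype V] (r k : ℕ) (hk : k ≤ r)
    (cA cB : V → ℕ) (P Q : V → Prop)
    (hcong : ∀ u u', cA u = cB u' → (P u ↔ Q u'))
    (hsz : ∀ i, Nat.card {u | cA u = i} = Nat.card {u' | cB u' = i} ∨
        (r ≤ Nat.card {u | cA u = i} ∧ r ≤ Nat.card {u' | cB u' = i})) :
    (k ≤ Nat.card {u | P u} ↔ k ≤ Nat.card {u | Q u}) := by
  classical
  rcases Nat.eq_zero_or_pos k with hk0 | hkpos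
  · subst hk0; simp
  have hr : 1 ≤ r := le_trans hkpos hk
  simp only [ncard_filter] at hsz ⊢
  by_cases hbig : ∃ u, P u ∧ r ≤ (Finset.univ.filter (fun v => cA v = cA u)).card ∧
      r ≤ (Finset.univ.filter (fun v => cB v = cA u)).card
  · obtain ⟨u, hPu, hA, hB⟩ := hbig
    -- the B fiber is nonempty
    obtain ⟨u', hu'⟩ : ∃ u', cB u' = cA u := by
      have : 0 < (Finset.univ.filter (fun v => cB v = cA u)).card := lt_of_lt_of_le hr hB
      obtain ⟨v, hv⟩ := Finset.card_pos.mp this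
      exact ⟨v, (Finset.mem_filter.mp hv).2⟩
    have hsubA : (Finset.univ.filter (fun v => cA v = cA u)) ⊆ Finset.univ.filter P := by
      intro v hv
      simp only [Finset.mem_filter, Finset.mem_univ, true_and] at hv ⊢
      exact ((hcong v u' (hv.trans hu'.symm)).trans (hcong u u' hu'.symm).symm).mpr hPu
    have hsubB : (Finset.univ.filter (fun v => cB v = cA u)) ⊆ Finset.univ.filter Q := by
      intro v hv
      simp only [Finset.mem_filter, Finset.mem_univ, true_and] at hv ⊢
      exact (hcong u v hv.symm).mp hPu
    constructor
    · intro _; exact le_trans (hk.trans hB) (Finset.card_le_card hsubB)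
    · intro _; exact le_trans (hk.trans hA) (Finset.card_le_card hsubA)
  · have key : ∀ i, (Finset.univ.filter (fun v => cA v = i ∧ P v)).card
        = (Finset.univ.filter (fun v => cB v = i ∧ Q v)).card := by
      intro i
      by_cases hA : ∃ u, cA u = i
      · obtain ⟨u0, hu0⟩ := hA
        have hBne : ∃ u', cB u' = i := by
          rcases hsz i with h | h
          · have : 0 < (Finset.univ.filter (fun v => cA v = i)).card :=
              Finset.card_pos.mpr ⟨u0, by simp [hu0]⟩
            rw [h] at this
            obtain ⟨v, hv⟩ := Finset.card_pos.mp this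
            exact ⟨v, (Finset.mem_filter.mp hv).2⟩
          · have : 0 < (Finset.univ.filter (fun v => cB v = i)).card := lt_of_lt_of_le hr h.2
            obtain ⟨v, hv⟩ := Finset.card_pos.mp this
            exact ⟨v, (Finset.mem_filter.mp hv).2⟩
        obtain ⟨u0', hu0'⟩ := hBne
        by_cases hP : P u0
        · -- fibers fully selected, sizes must be equal
          have heq : (Finset.univ.filter (fun v => cA v = i)).card
              = (Finset.univ.filter (fun v => cB v = i)).card := by
            rcases hsz i with h | h
            · exact h
            · exact absurd ⟨u0, hP, by rw [hu0]; exact h.1, by rw [hu0]; exact h.2⟩ hbig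
          have e1 : (Finset.univ.filter (fun v => cA v = i ∧ P v))
              = (Finset.univ.filter (fun v => cA v = i)) := by
            apply Finset.filter_congr
            intro v _
            simp only [and_iff_left_iff_imp]
            intro hv
            exact ((hcong v u0' (hv.trans hu0'.symm)).trans
              (hcong u0 u0' (hu0.trans hu0'.symm)).symm).mpr hP
          have e2 : (Finset.univ.filter (fun v => cB v = i ∧ Q v))
              = (Finset.univ.filter (fun v => cB v = i)) := by
            apply Finset.filter_congr
            intro v _
            simp only [and_iff_left_iff_imp]
            intro hv
            exact (hcong u0 v (hu0.trans hv.symm)).mp hP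
          rw [e1, e2, heq]
        · have e1 : (Finset.univ.filter (fun v => cA v = i ∧ P v)) = ∅ := by
            rw [Finset.filter_eq_empty_iff]
            rintro v _ ⟨hv, hPv⟩
            exact hP (((hcong v u0' (hv.trans hu0'.symm)).trans
              (hcong u0 u0' (hu0.trans hu0'.symm)).symm).mp hPv)
          have e2 : (Finset.univ.filter (fun v => cB v = i ∧ Q v)) = ∅ := by
            rw [Finset.filter_eq_empty_iff]
            rintro v _ ⟨hv, hQv⟩
            exact hP ((hcong u0 v (hu0.trans hv.symm)).mpr hQv)
          rw [e1, e2]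
      · -- A fiber empty, so B fiber empty too
        push_neg at hA
        have hB : ∀ u', cB u' ≠ i := by
          intro u' hu'
          rcases hsz i with h | h
          · have : (Finset.univ.filter (fun v => cA v = i)).card = 0 := by
              rw [Finset.card_eq_zero, Finset.filter_eq_empty_iff]
              intro v _; exact hA v
            rw [this] at h
            have : u' ∈ Finset.univ.filter (fun v => cB v = i) := by simp [hu']
            have := Finset.card_pos.mpr ⟨u', this⟩
            omega
          · have : (Finset.univ.filter (fun v => cA v = i)).card = 0 := by
              rw [Finset.card_eq_zero, Finset.filter_eq_empty_iff]
              intro v _; exact hA v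
            have h1 := h.1
            omega
        have e1 : (Finset.univ.filter (fun v => cA v = i ∧ P v)) = ∅ := by
          rw [Finset.filter_eq_empty_iff]; rintro v _ ⟨hv, _⟩; exact hA v hv
        have e2 : (Finset.univ.filter (fun v => cB v = i ∧ Q v)) = ∅ := by
          rw [Finset.filter_eq_empty_iff]; rintro v _ ⟨hv, _⟩; exact hB v hv
        rw [e1, e2]
    have hsum : (Finset.univ.filter P).card = (Finset.univ.filter Q).card := by
      have t := (Finset.univ.image cA) ∪ (Finset.univ.image cB)
      rw [Finset.card_eq_sum_card_fiberwise
        (f := cA) (t := (Finset.univ.image cA) ∪ (Finset.univ.image cB))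
        (fun x _ => by simp [Finset.mem_union]),
        Finset.card_eq_sum_card_fiberwise
        (f := cB) (t := (Finset.univ.image cA) ∪ (Finset.univ.image cB))
        (fun x _ => by simp [Finset.mem_union])]
      apply Finset.sum_congr rfl
      intro i _
      have := key i
      have e1 : ((Finset.univ.filter P).filter (fun v => cA v = i))
          = (Finset.univ.filter (fun v => cA v = i ∧ P v)) := by
        rw [Finset.filter_filter]
        exact Finset.filter_congr (fun v _ => and_comm)
      have e2 : ((Finset.univ.filter Q).filter (fun v => cB v = i))
          = (Finset.univ.filter (fun v => cB v = i ∧ Q v)) := by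
        rw [Finset.filter_filter]
        exact Finset.filter_congr (fun v _ => and_comm)
      rw [e1, e2, key i]
    rw [hsum]


def far (M c : ℕ) (v : Fin (40*M+1)) : Prop := c ≤ v.val ∧ v.val + c ≤ 40*M

def usim (M c : ℕ) (v v' : Fin (40*M+1)) : Prop := v.val = v'.val ∨ (far M c v ∧ far M c v')

def inv (M c : ℕ) (sx sy sx' sy' : Fin (40*M+1)) : Prop :=
  (usim M c sx sx' ∧ usim M c sy sy' ∧ (sx.val = sy.val ↔ sx'.val = sy'.val) ∧
    (sx.val < sy.val ↔ sx'.val < sy'.val) ∧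
    ¬(sx'.val = 10*M ∧ sy'.val = 20*M) ∧ ¬(sx'.val = 20*M ∧ sy'.val = 10*M))
  ∨ (far M c sx ∧ far M c sy ∧ sy.val < sx.val ∧ sx'.val = 10*M ∧ sy'.val = 20*M)
  ∨ (far M c sx ∧ far M c sy ∧ sx.val < sy.val ∧ sx'.val = 20*M ∧ sy'.val = 10*M)

def EA (M : ℕ) (u v : Fin (40*M+1)) : Prop := u.val < v.val

def EB (M : ℕ) (u v : Fin (40*M+1)) : Prop :=
  (u.val < v.val ∧ ¬(u.val = 10*M ∧ v.val = 20*M)) ∨ (u.val = 20*M ∧ v.val = 10*M)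

theorem inv_swap {M c : ℕ} {sx sy sx' sy' : Fin (40*M+1)} (h : inv M c sx sy sx' sy') :
    inv M c sy sx sy' sx' := by
  unfold inv usim far at *
  rcases h with h | h | h
  · exact Or.inl (by omega)
  · exact Or.inr (Or.inr (by omega))
  · exact Or.inr (Or.inl (by omega))

theorem inv_eq {M c : ℕ} {sx sy sx' sy' : Fin (40*M+1)}
    (h : inv M c sx sy sx' sy') : (sx = sy ↔ sx' = sy') := by
  rw [Fin.ext_iff, Fin.ext_iff]
  unfold inv usim far at h
  rcases h with h | h | h <;> omega

theorem inv_edge_xy {M c : ℕ} (hM : 1 ≤ M) {sx sy sx' sy' : Fin (40*M+1)}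
    (h : inv M c sx sy sx' sy') : (EA M sx sy ↔ EB M sx' sy') := by
  unfold inv usim far at h
  unfold EA EB
  rcases h with h | h | h <;> omega

theorem inv_edge_xx {M : ℕ} (hM : 1 ≤ M) (v v' : Fin (40*M+1)) : (EA M v v ↔ EB M v' v') := by
  unfold EA EB
  omega

theorem inv_usim_x {M c : ℕ} (hcM : c ≤ M) {sx sy sx' sy' : Fin (40*M+1)}
    (h : inv M c sx sy sx' sy') : usim M c sx sx' := by
  unfold inv at h
  rcases h with h | h | h
  · exact h.1
  · exact Or.inr ⟨h.1, by unfold far at *; omega⟩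
  · exact Or.inr ⟨h.1, by unfold far at *; omega⟩

theorem inv_usim_y {M c : ℕ} (hcM : c ≤ M) {sx sy sx' sy' : Fin (40*M+1)}
    (h : inv M c sx sy sx' sy') : usim M c sy sy' := by
  unfold inv at h
  rcases h with h | h | h
  · exact h.2.1
  · exact Or.inr ⟨h.2.1, by unfold far at *; omega⟩
  · exact Or.inr ⟨h.2.1, by unfold far at *; omega⟩


def code (M c z : ℕ) (u : Fin (40*M+1)) : ℕ :=
  if u.val < c ∨ 40*M < u.val + c then u.val + 2
  else if z ≤ u.val + c ∧ u.val ≤ z + c then 40*M + 3 + (u.val + c - z)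
  else if u.val < z then 0 else 1

def codeB (M c z : ℕ) (u : Fin (40*M+1)) : ℕ :=
  if z = 10*M ∧ u.val = 20*M then 0
  else if z = 20*M ∧ u.val = 10*M then 1
  else code M c z u

theorem code_spec (M c z : ℕ) (u : Fin (40*M+1)) :
    ((u.val < c ∨ 40*M < u.val + c) ∧ code M c z u = u.val + 2) ∨
    (¬(u.val < c ∨ 40*M < u.val + c) ∧ (z ≤ u.val + c ∧ u.val ≤ z + c) ∧
      code M c z u = 40*M + 3 + (u.val + c - z)) ∨
    (¬(u.val < c ∨ 40*M < u.val + c) ∧ ¬(z ≤ u.val + c ∧ u.val ≤ z + c) ∧ u.val < z ∧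
      code M c z u = 0) ∨
    (¬(u.val < c ∨ 40*M < u.val + c) ∧ ¬(z ≤ u.val + c ∧ u.val ≤ z + c) ∧ ¬(u.val < z) ∧
      code M c z u = 1) := by
  unfold code
  split_ifs with h1 h2 h3
  · exact Or.inl ⟨h1, rfl⟩
  · exact Or.inr (Or.inl ⟨h1, h2, rfl⟩)
  · exact Or.inr (Or.inr (Or.inl ⟨h1, h2, h3, rfl⟩))
  · exact Or.inr (Or.inr (Or.inr ⟨h1, h2, h3, rfl⟩))

theorem codeB_spec (M c z : ℕ) (u : Fin (40*M+1)) :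
    ((z = 10*M ∧ u.val = 20*M) ∧ codeB M c z u = 0) ∨
    (¬(z = 10*M ∧ u.val = 20*M) ∧ (z = 20*M ∧ u.val = 10*M) ∧ codeB M c z u = 1) ∨
    (¬(z = 10*M ∧ u.val = 20*M) ∧ ¬(z = 20*M ∧ u.val = 10*M) ∧ codeB M c z u = code M c z u) := by
  unfold codeB
  split_ifs with h1 h2
  · exact Or.inl ⟨h1, rfl⟩
  · exact Or.inr (Or.inl ⟨h1, h2, rfl⟩)
  · exact Or.inr (Or.inr ⟨h1, h2, rfl⟩)

theorem le_card_of_inj' {V : Type} [Fintype V] (p : V → Prop) (r : ℕ)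
    (f : Fin r → V) (hf : ∀ k, p (f k)) (hinj : Function.Injective f) :
    r ≤ Nat.card {u | p u} := by
  have h := Nat.card_le_card_of_injective
    (fun k : Fin r => (⟨f k, hf k⟩ : {u : V // u ∈ {u : V | p u}}))
    (fun a b hab => hinj (congrArg Subtype.val hab))
  rw [Nat.card_fin] at h; exact h

theorem le_card_of_vals {M : ℕ} (p : Fin (40*M+1) → Prop) (r : ℕ) (g : ℕ → ℕ)
    (hrange : ∀ k, k < r → g k ≤ 40*M)
    (hp : ∀ (u : Fin (40*M+1)) (k : ℕ), k < r → u.val = g k → p u)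
    (hinj : ∀ k1 k2, k1 < r → k2 < r → g k1 = g k2 → k1 = k2) :
    r ≤ Nat.card {u | p u} := by
  apply le_card_of_inj' p r
    (fun k : Fin r => ⟨g k.val, by have h1 := k.isLt; have h2 := hrange k.val h1; omega⟩)
  · intro k
    exact hp _ k.val k.isLt rfl
  · intro a b hab
    apply Fin.ext
    exact hinj a.val b.val a.isLt b.isLt (congrArg Fin.val hab)

theorem card_eq_one_of {V : Type} [Fintype V] (p : V → Prop) (x : V)
    (hx : ∀ u, p u ↔ u = x) : Nat.card {u | p u} = 1 := by
  have h : {u | p u} = {x} := Set.ext (fun u => by simp [hx])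
  rw [h]
  simp

set_option maxHeartbeats 1000000 in
theorem step_core (M c r : ℕ) (hc : r + 3 ≤ c) (hcM : (r+3) * c ≤ M)
    (s s' : Fin (40*M+1)) (hus : usim M ((r+3)*c) s s') :
    ∃ cA cB : Fin (40*M+1) → ℕ,
      (∀ u u', cA u = cB u' → inv M c s u s' u') ∧
      (∀ i, Nat.card {u : Fin (40*M+1) | cA u = i} = Nat.card {u' : Fin (40*M+1) | cB u' = i} ∨
        (r ≤ Nat.card {u : Fin (40*M+1) | cA u = i} ∧
          r ≤ Nat.card {u' : Fin (40*M+1) | cB u' = i})) := by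
  classical
  have hs40 := s.isLt
  have hs'40 := s'.isLt
  obtain ⟨K, hcK, hK3, hKr, hKM, hss⟩ :
      ∃ K, c ≤ K ∧ 3*c ≤ K ∧ r + 3*c ≤ K ∧ K ≤ M ∧
        (s.val = s'.val ∨ (K ≤ s.val ∧ s.val + K ≤ 40*M ∧ K ≤ s'.val ∧ s'.val + K ≤ 40*M)) := by
    refine ⟨(r+3)*c, ?_, ?_, ?_, hcM, ?_⟩
    · exact Nat.le_mul_of_pos_left c (by omega)
    · exact Nat.mul_le_mul_right c (by omega)
    · have h1 : r*1 ≤ r*c := Nat.mul_le_mul_left r (by omega)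
      have h2 : (r+3)*c = r*c + 3*c := by ring
      omega
    · unfold usim far at hus
      tauto
  refine ⟨code M c s.val, codeB M c s'.val, ?_, ?_⟩
  · -- matched classes put positions back in the invariant
    intro u u' h
    have hu40 := u.isLt
    have hu'40 := u'.isLt
    have husc : usim M c s s' := by
      unfold usim far
      omega
    rcases codeB_spec M c s'.val u' with ⟨hov, hcd⟩ | ⟨hov1, hov, hcd⟩ | ⟨hov1, hov2, hcd⟩
    · -- override: u' = Q with pebble at P
      rw [hcd] at h
      rcases code_spec M c s.val u with ⟨h1, h2⟩ | ⟨h1, h2, h3⟩ | ⟨h1, h2, h3, h4⟩ |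
        ⟨h1, h2, h3, h4⟩
      · omega
      · omega
      · exact Or.inr (Or.inl ⟨by unfold far; omega, by unfold far; omega, h3, hov.1, hov.2⟩)
      · omega
    · -- override: u' = P with pebble at Q
      rw [hcd] at h
      rcases code_spec M c s.val u with ⟨h1, h2⟩ | ⟨h1, h2, h3⟩ | ⟨h1, h2, h3, h4⟩ |
        ⟨h1, h2, h3, h4⟩
      · omega
      · omega
      · omega
      · exact Or.inr (Or.inr ⟨by unfold far; omega, by unfold far; omega, by omega,
          hov.1, hov.2⟩)
    · -- no override
      rw [hcd] at h
      rcases code_spec M c s.val u with ⟨a1, a2⟩ | ⟨a1, a2, a3⟩ | ⟨a1, a2, a3, a4⟩ |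
          ⟨a1, a2, a3, a4⟩ <;>
        rcases code_spec M c s'.val u' with ⟨b1, b2⟩ | ⟨b1, b2, b3⟩ | ⟨b1, b2, b3, b4⟩ |
          ⟨b1, b2, b3, b4⟩ <;>
        [skip; omega; omega; omega; omega; skip; omega; omega;
          omega; omega; skip; omega; omega; omega; omega; skip] <;>
        exact Or.inl ⟨husc, by unfold usim far; omega, by omega, by omega, hov1, hov2⟩
  · -- class sizes
    intro i
    by_cases hid : s.val = s'.val ∧ s'.val ≠ 10*M ∧ s'.val ≠ 20*M
    · left
      have hfun : ∀ u : Fin (40*M+1), codeB M c s'.val u = code M c s.val u := by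
        intro u
        unfold codeB
        rw [if_neg (by tauto), if_neg (by tauto)]
        exact congrArg (fun z => code M c z u) hid.1.symm
      have hset : {u : Fin (40*M+1) | codeB M c s'.val u = i}
          = {u : Fin (40*M+1) | code M c s.val u = i} :=
        Set.ext fun u => by simp only [Set.mem_setOf_eq]; rw [hfun u]
      rw [hset]
    · have hfar : K ≤ s.val ∧ s.val + K ≤ 40*M ∧ K ≤ s'.val ∧ s'.val + K ≤ 40*M := by
        omega
      by_cases hi0 : i = 0
      · subst hi0
        right
        constructor
        · apply le_card_of_vals _ r (fun k => s.val - c - 1 - k)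
            (fun k hk => by show s.val - c - 1 - k ≤ 40*M; omega)
          · intro u k hk hval
            rcases code_spec M c s.val u with ⟨h1, h2⟩ | ⟨h1, h2, h3⟩ | ⟨h1, h2, h3, h4⟩ |
              ⟨h1, h2, h3, h4⟩
            · omega
            · omega
            · exact h4
            · omega
          · intro k1 k2 hk1 hk2 hab
            omega
        · apply le_card_of_vals _ r (fun k => s'.val - c - 1 - k)
            (fun k hk => by show s'.val - c - 1 - k ≤ 40*M; omega)
          · intro u k hk hval
            rcases codeB_spec M c s'.val u with ⟨hov, hcd⟩ | ⟨hov1, hov, hcd⟩ | ⟨hov1, hov2, hcd⟩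
            · exact hcd
            · omega
            · rw [hcd]
              rcases code_spec M c s'.val u with ⟨h1, h2⟩ | ⟨h1, h2, h3⟩ | ⟨h1, h2, h3, h4⟩ |
                ⟨h1, h2, h3, h4⟩
              · omega
              · omega
              · exact h4
              · omega
          · intro k1 k2 hk1 hk2 hab
            omega
      · by_cases hi1 : i = 1
        · subst hi1
          right
          constructor
          · apply le_card_of_vals _ r (fun k => s.val + c + 1 + k)
              (fun k hk => by show s.val + c + 1 + k ≤ 40*M; omega)
            · intro u k hk hval
              rcases code_spec M c s.val u with ⟨h1, h2⟩ | ⟨h1, h2, h3⟩ | ⟨h1, h2, h3, h4⟩ |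
                ⟨h1, h2, h3, h4⟩
              · omega
              · omega
              · omega
              · exact h4
            · intro k1 k2 hk1 hk2 hab
              omega
          · apply le_card_of_vals _ r (fun k => s'.val + c + 1 + k)
              (fun k hk => by show s'.val + c + 1 + k ≤ 40*M; omega)
            · intro u k hk hval
              rcases codeB_spec M c s'.val u with ⟨hov, hcd⟩ | ⟨hov1, hov, hcd⟩ |
                ⟨hov1, hov2, hcd⟩
              · omega
              · exact hcd
              · rw [hcd]
                rcases code_spec M c s'.val u with ⟨h1, h2⟩ | ⟨h1, h2, h3⟩ | ⟨h1, h2, h3, h4⟩ |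
                  ⟨h1, h2, h3, h4⟩
                · omega
                · omega
                · omega
                · exact h4
            · intro k1 k2 hk1 hk2 hab
              omega
        · by_cases hi2 : 2 ≤ i ∧ i ≤ 40*M + 2
          · left
            have eA : {u : Fin (40*M+1) | code M c s.val u = i}
                = {u : Fin (40*M+1) | (u.val < c ∨ 40*M < u.val + c) ∧ u.val + 2 = i} := by
              apply Set.ext
              intro u
              simp only [Set.mem_setOf_eq]
              rcases code_spec M c s.val u with ⟨h1, h2⟩ | ⟨h1, h2, h3⟩ | ⟨h1, h2, h3, h4⟩ |
                ⟨h1, h2, h3, h4⟩ <;> omega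
            have eB : {u : Fin (40*M+1) | codeB M c s'.val u = i}
                = {u : Fin (40*M+1) | (u.val < c ∨ 40*M < u.val + c) ∧ u.val + 2 = i} := by
              apply Set.ext
              intro u
              simp only [Set.mem_setOf_eq]
              rcases codeB_spec M c s'.val u with ⟨hov, hcd⟩ | ⟨hov1, hov, hcd⟩ |
                ⟨hov1, hov2, hcd⟩ <;>
                rcases code_spec M c s'.val u with ⟨h1, h2⟩ | ⟨h1, h2, h3⟩ | ⟨h1, h2, h3, h4⟩ |
                  ⟨h1, h2, h3, h4⟩ <;> omega
            rw [eA, eB]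
          · by_cases hi3 : 40*M + 3 ≤ i ∧ i ≤ 40*M + 3 + 2*c
            · left
              have e1 : Nat.card {u : Fin (40*M+1) | code M c s.val u = i} = 1 := by
                apply card_eq_one_of _ (⟨s.val + (i - (40*M+3)) - c, by omega⟩ : Fin (40*M+1))
                intro u
                rw [Fin.ext_iff]
                have hv : ((⟨s.val + (i - (40*M+3)) - c, by omega⟩ : Fin (40*M+1)) :
                    Fin (40*M+1)).val = s.val + (i - (40*M+3)) - c := rfl
                rw [hv]
                rcases code_spec M c s.val u with ⟨h1, h2⟩ | ⟨h1, h2, h3⟩ | ⟨h1, h2, h3, h4⟩ |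
                  ⟨h1, h2, h3, h4⟩ <;> omega
              have e2 : Nat.card {u : Fin (40*M+1) | codeB M c s'.val u = i} = 1 := by
                apply card_eq_one_of _ (⟨s'.val + (i - (40*M+3)) - c, by omega⟩ : Fin (40*M+1))
                intro u
                rw [Fin.ext_iff]
                have hv : ((⟨s'.val + (i - (40*M+3)) - c, by omega⟩ : Fin (40*M+1)) :
                    Fin (40*M+1)).val = s'.val + (i - (40*M+3)) - c := rfl
                rw [hv]
                rcases codeB_spec M c s'.val u with ⟨hov, hcd⟩ | ⟨hov1, hov, hcd⟩ |
                  ⟨hov1, hov2, hcd⟩ <;>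
                  rcases code_spec M c s'.val u with ⟨h1, h2⟩ | ⟨h1, h2, h3⟩ |
                    ⟨h1, h2, h3, h4⟩ | ⟨h1, h2, h3, h4⟩ <;> omega
              rw [e1, e2]
            · left
              have e1 : {u : Fin (40*M+1) | code M c s.val u = i} = (∅ : Set (Fin (40*M+1))) := by
                apply Set.ext
                intro u
                simp only [Set.mem_setOf_eq, Set.mem_empty_iff_false, iff_false]
                have hu40 := u.isLt
                rcases code_spec M c s.val u with ⟨h1, h2⟩ | ⟨h1, h2, h3⟩ | ⟨h1, h2, h3, h4⟩ |
                  ⟨h1, h2, h3, h4⟩ <;> omega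
              have e2 : {u : Fin (40*M+1) | codeB M c s'.val u = i} = (∅ : Set (Fin (40*M+1))) := by
                apply Set.ext
                intro u
                simp only [Set.mem_setOf_eq, Set.mem_empty_iff_false, iff_false]
                have hu40 := u.isLt
                rcases codeB_spec M c s'.val u with ⟨hov, hcd⟩ | ⟨hov1, hov, hcd⟩ |
                  ⟨hov1, hov2, hcd⟩ <;>
                  rcases code_spec M c s'.val u with ⟨h1, h2⟩ | ⟨h1, h2, h3⟩ |
                    ⟨h1, h2, h3, h4⟩ | ⟨h1, h2, h3, h4⟩ <;> omega
              rw [e1, e2]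


def asg (M : ℕ) (u v : Fin (40*M+1)) : C2Var → Fin (40*M+1) :=
  fun w => match w with | .x => u | .y => v

theorem upd_y (M : ℕ) (u v w : Fin (40*M+1)) :
    Function.update (asg M u v) C2Var.y w = asg M u w := by
  funext z
  cases z <;> simp [asg, Function.update]

theorem upd_x (M : ℕ) (u v w : Fin (40*M+1)) :
    Function.update (asg M u v) C2Var.x w = asg M w v := by
  funext z
  cases z <;> simp [asg, Function.update]

theorem agree (d r M : ℕ) (ψ : C2 d) :
    ∀ (j : ℕ), ψ.depth ≤ j → ψ.rank ≤ r → (r+3)^(j+1) ≤ M →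
    ∀ (ax ay bx by' : Fin (40*M+1)), inv M ((r+3)^(j+1)) ax ay bx by' →
    (C2.sat (EA M) (fun _ _ => false) ψ (asg M ax ay) ↔
      C2.sat (EB M) (fun _ _ => false) ψ (asg M bx by')) := by
  have hM3 : ∀ j : ℕ, (r+3)^(j+1) ≤ M → 1 ≤ M := by
    intro j h
    have : 1 ≤ (r+3)^(j+1) := Nat.one_le_pow _ _ (by omega)
    omega
  induction ψ with
  | eq s t =>
    intro j _ _ hjm ax ay bx by' hinv
    have hM : 1 ≤ M := hM3 j hjm
    cases s <;> cases t <;> simp only [C2.sat, asg]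
    · exact inv_eq hinv
    · exact eq_comm.trans ((inv_eq hinv).trans eq_comm)
  | edge s t =>
    intro j _ _ hjm ax ay bx by' hinv
    have hM : 1 ≤ M := hM3 j hjm
    cases s <;> cases t <;> simp only [C2.sat, asg]
    · exact inv_edge_xx hM ax bx
    · exact inv_edge_xy hM hinv
    · exact inv_edge_xy hM (inv_swap hinv)
    · exact inv_edge_xx hM ay by'
  | pred i s =>
    intro j _ _ hjm ax ay bx by' hinv
    cases s <;> simp [C2.sat, asg]
  | not ψ ih =>
    intro j hd hr hjm ax ay bx by' hinv
    simp only [C2.sat]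
    rw [ih j hd hr hjm ax ay bx by' hinv]
  | and ψ₁ ψ₂ ih₁ ih₂ =>
    intro j hd hr hjm ax ay bx by' hinv
    simp only [C2.sat]
    have hd' : ψ₁.depth ≤ j ∧ ψ₂.depth ≤ j := by
      simp only [C2.depth] at hd; omega
    have hr' : ψ₁.rank ≤ r ∧ ψ₂.rank ≤ r := by
      simp only [C2.rank] at hr; omega
    rw [ih₁ j hd'.1 hr'.1 hjm ax ay bx by' hinv, ih₂ j hd'.2 hr'.2 hjm ax ay bx by' hinv]
  | or ψ₁ ψ₂ ih₁ ih₂ =>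
    intro j hd hr hjm ax ay bx by' hinv
    simp only [C2.sat]
    have hd' : ψ₁.depth ≤ j ∧ ψ₂.depth ≤ j := by
      simp only [C2.depth] at hd; omega
    have hr' : ψ₁.rank ≤ r ∧ ψ₂.rank ≤ r := by
      simp only [C2.rank] at hr; omega
    rw [ih₁ j hd'.1 hr'.1 hjm ax ay bx by' hinv, ih₂ j hd'.2 hr'.2 hjm ax ay bx by' hinv]
  | exN k w ψ ih =>
    intro j hd hr hjm ax ay bx by' hinv
    have hdψ : ψ.depth + 1 ≤ j := by simpa [C2.depth] using hd
    obtain ⟨j', rfl⟩ : ∃ j', j = j' + 1 := ⟨j - 1, by omega⟩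
    have hk : k ≤ r := le_trans (le_max_left _ _) hr
    have hrψ : ψ.rank ≤ r := le_trans (le_max_right _ _) hr
    have hdψ' : ψ.depth ≤ j' := by omega
    have hc : r + 3 ≤ (r+3)^(j'+1) := Nat.le_self_pow (by omega) _
    have hpow : (r+3)^(j'+1+1) = (r+3) * ((r+3)^(j'+1)) := by
      rw [pow_succ, mul_comm]
    have hcM : (r+3) * ((r+3)^(j'+1)) ≤ M := by rw [← hpow]; exact hjm
    have hjm' : (r+3)^(j'+1) ≤ M :=
      le_trans (Nat.pow_le_pow_right (by omega) (by omega)) hjm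
    have hcm2 : (r+3)^(j'+1+1) ≤ M := hjm
    simp only [C2.sat]
    cases w with
    | y =>
      have hus : usim M ((r+3)*((r+3)^(j'+1))) ax bx := by
        rw [← hpow]
        exact inv_usim_x hcm2 hinv
      obtain ⟨cA, cB, hcong, hsz⟩ := step_core M ((r+3)^(j'+1)) r hc hcM ax bx hus
      simp only [upd_y]
      exact count_lemma r k hk cA cB _ _
        (fun u u' h => ih j' hdψ' hrψ hjm' ax u bx u' (hcong u u' h)) hsz
    | x =>
      have hus : usim M ((r+3)*((r+3)^(j'+1))) ay by' := by
        rw [← hpow]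
        exact inv_usim_y hcm2 hinv
      obtain ⟨cA, cB, hcong, hsz⟩ := step_core M ((r+3)^(j'+1)) r hc hcM ay by' hus
      simp only [upd_x]
      exact count_lemma r k hk cA cB _ _
        (fun u u' h => ih j' hdψ' hrψ hjm' u ay u' by' (inv_swap (hcong u u' h))) hsz

end Stmt6Aux

/-- for no `d` is there a `C²` formula `φ(x)` with one free variable `x` such
that, over all finite directed labelled graphs of dimension `d`, `φ` holds at a node iff
the edge relation of the graph is a strict linear order. -/
theorem stmt6 (d : ℕ) :
    ¬ ∃ φ : C2 d, φ.freeVars = {C2Var.x} ∧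
      ∀ (V : Type) [Fintype V] (E : V → V → Prop), (∀ v, ¬ E v v) →
        ∀ (lab : V → Fin d → Bool) (v : V),
          (C2.sat E lab φ (fun _ => v) ↔ IsStrictLinearOrderRel E) := by
  classical
  rintro ⟨φ, -, hφ⟩
  set r := φ.rank with hr
  set m := φ.depth with hm
  set M := (r+3)^(m+1) with hMdef
  have hM : 1 ≤ M := Nat.one_le_pow _ _ (by omega)
  have hv0 : 0 < 40*M+1 := by omega
  set v0 : Fin (40*M+1) := ⟨0, hv0⟩ with hv0d
  have hasg : (fun _ : C2Var => v0) = Stmt6Aux.asg M v0 v0 := by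
    funext w; cases w <;> rfl
  -- A is a strict linear order
  have hAlin : IsStrictLinearOrderRel (Stmt6Aux.EA M) := by
    refine ⟨fun v => by simp [Stmt6Aux.EA], fun u v w h1 h2 => by
      simp only [Stmt6Aux.EA] at *; omega, fun u v huv => ?_⟩
    have : u.val ≠ v.val := fun h => huv (Fin.ext h)
    simp only [Stmt6Aux.EA]
    omega
  -- B is not
  have hBnotlin : ¬ IsStrictLinearOrderRel (Stmt6Aux.EB M) := by
    rintro ⟨-, htr, -⟩
    have h1 : Stmt6Aux.EB M ⟨20*M, by omega⟩ ⟨10*M, by omega⟩ := by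
      right; constructor <;> rfl
    have h2 : Stmt6Aux.EB M ⟨10*M, by omega⟩ ⟨10*M+1, by omega⟩ := by
      left
      refine ⟨?_, ?_⟩
      · show 10*M < 10*M+1
        omega
      · rintro ⟨-, h⟩
        have h' : 10*M+1 = 20*M := h
        omega
    have h3 := htr _ _ _ h1 h2
    rcases h3 with ⟨h, -⟩ | ⟨-, h⟩
    · have h' : 20*M < 10*M+1 := h
      omega
    · have h' : 10*M+1 = 10*M := h
      omega
  have hBirr : ∀ v : Fin (40*M+1), ¬ Stmt6Aux.EB M v v := by
    intro v h
    rcases h with ⟨h, -⟩ | ⟨h1, h2⟩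
    · omega
    · omega
  have hAirr : ∀ v : Fin (40*M+1), ¬ Stmt6Aux.EA M v v := fun v h => by
    simp [Stmt6Aux.EA] at h
  have hsatA := (hφ (Fin (40*M+1)) (Stmt6Aux.EA M) hAirr (fun _ _ => false) v0).mpr hAlin
  have hsatB : ¬ C2.sat (Stmt6Aux.EB M) (fun _ _ => false) φ (fun _ => v0) := by
    intro h
    exact hBnotlin ((hφ (Fin (40*M+1)) (Stmt6Aux.EB M) hBirr (fun _ _ => false) v0).mp h)
  have hinv0 : Stmt6Aux.inv M ((r+3)^(m+1)) v0 v0 v0 v0 := by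
    left
    refine ⟨Or.inl rfl, Or.inl rfl, Iff.rfl, Iff.rfl, ?_, ?_⟩
    · rintro ⟨h, -⟩
      have h' : (0:ℕ) = 10*M := h
      omega
    · rintro ⟨h, -⟩
      have h' : (0:ℕ) = 20*M := h
      omega
  have := Stmt6Aux.agree d r M φ m le_rfl le_rfl le_rfl v0 v0 v0 v0 hinv0
  rw [hasg] at hsatA hsatB
  exact hsatB (this.mp hsatA)
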